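/- Let λ > 0 be real and θ ∈ (0, π). Then the circles C₁ = {z ∈ ℂ : |z − i·tanh(λ/2)·tan(θ/2)| = tanh(λ/2)·sec(θ/2)} and C₂ = {z ∈ ℂ : |z + i·coth(λ/2)·tan(θ/2)| = coth(λ/2)·sec(θ/2)} are disjoint if and only if cos(θ/2) > tanh(λ) (equivalently, sin(θ/2) < sech(λ)); moreover when they are disjoint, C₁ lies in the open disc bounded by C₂. -/

import Mathlib

set_option maxHeartbeats 1000000

theorem circles_disjoint_iff (l θ : ℝ) (hl : 0 < l) (hθ : θ ∈ Set.Ioo 0 Real.pi) :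
    (({z : ℂ | ‖z - Complex.I * (Real.tanh (l/2) * Real.tan (θ/2))‖ =
          Real.tanh (l/2) * (1 / Real.cos (θ/2))} ∩
        {z : ℂ | ‖z + Complex.I * ((Real.cosh (l/2) / Real.sinh (l/2)) * Real.tan (θ/2))‖ =
          (Real.cosh (l/2) / Real.sinh (l/2)) * (1 / Real.cos (θ/2))}) = ∅
      ↔ Real.cos (θ/2) > Real.tanh l) ∧
    (Real.cos (θ/2) > Real.tanh l ↔ Real.sin (θ/2) < 1 / Real.cosh l) ∧
    (Real.cos (θ/2) > Real.tanh l →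
      ∀ z : ℂ,
        ‖z - Complex.I * (Real.tanh (l/2) * Real.tan (θ/2))‖ =
          Real.tanh (l/2) * (1 / Real.cos (θ/2)) →
        ‖z + Complex.I * ((Real.cosh (l/2) / Real.sinh (l/2)) * Real.tan (θ/2))‖ <
          (Real.cosh (l/2) / Real.sinh (l/2)) * (1 / Real.cos (θ/2))) := by
  obtain ⟨hθ0, hθπ⟩ := hθ
  set t := Real.tanh (l/2) with ht_def
  set s := Real.sin (θ/2) with hs_def
  set co := Real.cos (θ/2) with hco_def
  have hch : 0 < Real.cosh (l/2) := Real.cosh_pos _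
  have hsh : 0 < Real.sinh (l/2) := Real.sinh_pos_iff.mpr (by linarith)
  have hpyth : Real.cosh (l/2)^2 - Real.sinh (l/2)^2 = 1 := Real.cosh_sq_sub_sinh_sq _
  have ht0 : 0 < t := by rw [ht_def, Real.tanh_eq_sinh_div_cosh]; positivity
  have htch : Real.sinh (l/2) = t * Real.cosh (l/2) := by
    rw [ht_def, Real.tanh_eq_sinh_div_cosh]; field_simp; try ring
  have hch2 : Real.cosh (l/2)^2 * (1 - t^2) = 1 := by
    linear_combination hpyth + (Real.sinh (l/2) + t*Real.cosh (l/2)) * htch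
  have h1t : (0:ℝ) < 1 - t^2 := by nlinarith [hch2, mul_pos hch hch]
  have ht1 : t < 1 := by nlinarith [h1t, ht0]
  have hcoth : Real.cosh (l/2) / Real.sinh (l/2) = 1/t := by
    rw [htch]; field_simp; try ring
  have hcothC : (Real.cosh (l/2) : ℂ) / (Real.sinh (l/2) : ℂ) = ((1/t : ℝ) : ℂ) := by
    rw [← Complex.ofReal_div, hcoth]
  have hcoshl : Real.cosh l = (1+t^2)/(1-t^2) := by
    have hll : l = 2 * (l/2) := by ring
    rw [hll, Real.cosh_two_mul, htch]
    rw [eq_div_iff h1t.ne']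
    linear_combination (1 + t^2) * hch2
  have hsinhl : Real.sinh l = 2*t/(1-t^2) := by
    have hll : l = 2 * (l/2) := by ring
    rw [hll, Real.sinh_two_mul, htch]
    rw [eq_div_iff h1t.ne']
    linear_combination 2 * t * hch2
  have htanhl : Real.tanh l = 2*t/(1+t^2) := by
    rw [Real.tanh_eq_sinh_div_cosh, hsinhl, hcoshl]
    rw [div_div_div_eq]
    rw [mul_comm (2*t) (1-t^2), mul_div_mul_left]
    linarith
  have hco0 : 0 < co := by
    rw [hco_def]; exact Real.cos_pos_of_mem_Ioo ⟨by linarith [Real.pi_pos], by linarith⟩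
  have hs0 : 0 < s := by
    rw [hs_def]; exact Real.sin_pos_of_pos_of_lt_pi (by linarith) (by linarith [Real.pi_pos])
  have hpy : s^2 + co^2 = 1 := by rw [hs_def, hco_def]; exact Real.sin_sq_add_cos_sq _
  have hco2 : co^2 = 1 - s^2 := by linarith
  have hs1 : s < 1 := by nlinarith
  have htan : Real.tan (θ/2) = s/co := Real.tan_eq_sin_div_cos _
  clear_value t s co
  simp only [htan, hcothC, hcoth]
  have hP : (0:ℝ) < s * (1+t^2) := by nlinarith
  have hsub : co^2*(1+t^2)^2 = (1-s^2)*(1+t^2)^2 := by rw [hco2]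
  -- the key equivalence
  have keyB : co > Real.tanh l ↔ s * (1+t^2) < 1 - t^2 := by
    rw [htanhl, gt_iff_lt, div_lt_iff₀ (by positivity : (0:ℝ) < 1 + t^2)]
    constructor
    · intro h
      have h2 : (2*t)*(2*t) < (co*(1+t^2))*(co*(1+t^2)) :=
        mul_self_lt_mul_self (by linarith) h
      have h4 : (s*(1+t^2))^2 < (1-t^2)^2 := by nlinarith [h2, hsub]
      exact lt_of_pow_lt_pow_left₀ 2 h1t.le h4
    · intro h
      have h4 : (s*(1+t^2))^2 < (1-t^2)^2 := by nlinarith [h, hP]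
      have h5 : (2*t)^2 < (co*(1+t^2))^2 := by nlinarith [h4, hsub]
      exact lt_of_pow_lt_pow_left₀ 2 (by positivity) h5
  -- second conjunct
  have key2 : co > Real.tanh l ↔ s < 1 / Real.cosh l := by
    have hc : (1:ℝ)/Real.cosh l = (1-t^2)/(1+t^2) := by rw [hcoshl, one_div_div]
    rw [keyB, hc, lt_div_iff₀ (by positivity : (0:ℝ) < 1 + t^2)]
  -- third conjunct
  have hpart3 : co > Real.tanh l →
      ∀ z : ℂ, ‖z - Complex.I * ((t:ℂ) * ((s/co : ℝ) : ℂ))‖ = t * (1/co) →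
        ‖z + Complex.I * (((1/t : ℝ) : ℂ) * ((s/co : ℝ) : ℂ))‖ < 1/t * (1/co) := by
    intro hco z hz
    have hkey : s * (1+t^2) < 1 - t^2 := keyB.mp hco
    have hr : t*(1/co) + (t + 1/t)*(s/co) < 1/t * (1/co) := by
      have h2 : 1/t*(1/co) - (t*(1/co) + (t + 1/t)*(s/co))
          = ((1-t^2) - s*(1+t^2))/(t*co) := by field_simp; ring
      have h3 : 0 < ((1-t^2) - s*(1+t^2))/(t*co) :=
        div_pos (by linarith) (mul_pos ht0 hco0)
      linarith
    have e : z + Complex.I * (((1/t : ℝ) : ℂ) * ((s/co : ℝ) : ℂ))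
        = (z - Complex.I * ((t:ℂ) * ((s/co : ℝ) : ℂ)))
          + Complex.I * (((t + 1/t)*(s/co) : ℝ) : ℂ) := by
      push_cast; ring
    calc ‖z + Complex.I * (((1/t : ℝ) : ℂ) * ((s/co : ℝ) : ℂ))‖
        ≤ ‖z - Complex.I * ((t:ℂ) * ((s/co : ℝ) : ℂ))‖
          + ‖Complex.I * (((t + 1/t)*(s/co) : ℝ) : ℂ)‖ := by
          rw [e]; exact norm_add_le _ _
      _ = t*(1/co) + (t + 1/t)*(s/co) := by
          rw [hz, norm_mul, Complex.norm_I, Complex.norm_real, Real.norm_eq_abs, one_mul,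
            abs_of_nonneg (by positivity)]
      _ < 1/t * (1/co) := hr
  refine ⟨⟨?_, ?_⟩, key2, hpart3⟩
  · -- empty → condition
    intro hempty
    by_contra hcon
    push_neg at hcon
    have hge : 1 - t^2 ≤ s*(1+t^2) := by
      by_contra h2
      push_neg at h2
      exact absurd (keyB.mpr h2) (not_lt.mpr hcon)
    set y : ℝ := (1-t^2)*co/(2*t*s) with hy_def
    set D : ℝ := (t*(1/co))^2 - (y - t*(s/co))^2 with hD_def
    clear_value y D
    have hf1 : t*(1/co) + (y - t*(s/co)) = (1-t^2)*co/(2*t*s) + t*(1-s)/co := by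
      rw [hy_def]; field_simp; ring
    have hf1pos : 0 ≤ t*(1/co) + (y - t*(s/co)) := by
      rw [hf1]
      have := div_pos (mul_pos h1t hco0) (mul_pos (mul_pos two_pos ht0) hs0)
      have := div_pos (mul_pos ht0 (by linarith : (0:ℝ) < 1 - s)) hco0
      linarith
    have hf2 : t*(1/co) - (y - t*(s/co))
        = (2*t^2*s*(1+s) - (1-t^2)*co^2)/(2*t*s*co) := by
      rw [hy_def]; field_simp; ring
    have hnum : 0 ≤ 2*t^2*s*(1+s) - (1-t^2)*co^2 := by
      rw [hco2]; nlinarith [hge, hs0, hs1]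
    have hf2pos : 0 ≤ t*(1/co) - (y - t*(s/co)) := by
      rw [hf2]
      exact div_nonneg hnum (by positivity)
    have hD0 : 0 ≤ D := by nlinarith [mul_nonneg hf2pos hf1pos, hD_def]
    set x : ℝ := Real.sqrt D with hx_def
    clear_value x
    have hx2 : x^2 = D := by rw [hx_def]; exact Real.sq_sqrt hD0
    have habs1 : ‖((x:ℂ) + (y:ℂ)*Complex.I) - Complex.I * ((t:ℂ) * ((s/co : ℝ) : ℂ))‖
        = t * (1/co) := by
      have e : ((x:ℂ) + (y:ℂ)*Complex.I) - Complex.I * ((t:ℂ) * ((s/co : ℝ) : ℂ))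
          = (x:ℂ) + ((y - t*(s/co) : ℝ) : ℂ)*Complex.I := by push_cast; ring
      rw [e, Complex.norm_add_mul_I,
        show x^2 + (y - t*(s/co))^2 = (t*(1/co))^2 by rw [hx2, hD_def]; ring]
      exact Real.sqrt_sq (by positivity)
    have hsum : co/s + s/co = 1/(s*co) := by
      field_simp
      linear_combination hpy
    have hrad : (y - t*(s/co))^2 - (y + (1/t)*(s/co))^2
        = (t*(1/co))^2 - (1/t*(1/co))^2 := by
      have e2 : (y - t*(s/co)) + (y + (1/t)*(s/co)) = ((1-t^2)/t) * (co/s + s/co) := by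
        rw [hy_def]; field_simp; ring
      calc (y - t*(s/co))^2 - (y + (1/t)*(s/co))^2
          = (-((t + 1/t)*(s/co))) * ((y - t*(s/co)) + (y + (1/t)*(s/co))) := by
            field_simp; ring
        _ = (-((t + 1/t)*(s/co))) * (((1-t^2)/t) * (1/(s*co))) := by rw [e2, hsum]
        _ = (t*(1/co))^2 - (1/t*(1/co))^2 := by field_simp; ring
    have habs2 : ‖((x:ℂ) + (y:ℂ)*Complex.I) + Complex.I * (((1/t : ℝ) : ℂ) * ((s/co : ℝ) : ℂ))‖
        = 1/t * (1/co) := by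
      have e : ((x:ℂ) + (y:ℂ)*Complex.I) + Complex.I * (((1/t : ℝ) : ℂ) * ((s/co : ℝ) : ℂ))
          = (x:ℂ) + ((y + (1/t)*(s/co) : ℝ) : ℂ)*Complex.I := by push_cast; ring
      rw [e, Complex.norm_add_mul_I,
        show x^2 + (y + (1/t)*(s/co))^2 = (1/t*(1/co))^2 by
          rw [hx2, hD_def]; linarith [hrad]]
      exact Real.sqrt_sq (by positivity)
    have hmem : ((x:ℂ) + (y:ℂ)*Complex.I) ∈ (∅ : Set ℂ) := by
      rw [← hempty]; exact ⟨habs1, habs2⟩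
    exact Set.notMem_empty _ hmem
  · -- condition → empty
    intro hco
    rw [Set.eq_empty_iff_forall_notMem]
    rintro z ⟨h1, h2⟩
    exact absurd h2 (ne_of_lt (hpart3 hco z h1))
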